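/- Let (Ω, P) be a probability space, let N = (N_1, ..., N_m) be a vector of square-integrable real random variables with E[N_i] = 0 and positive-definite covariance matrix K_2, let ν ∈ ℝ^m, let λ > 0, and set K_1 = K_2 + λ^2 νν^T and SNR_a = det(K_1)/det(K_2) − 1. Then there exists a vector w* ∈ ℝ^m such that for every real random variable X' independent of N with E[X'] = 0 and E[(X')^2] ≤ λ^2, one has E[(w*^T (νX' + N) − X')^2] ≤ λ^2 / (1 + SNR_a). -/

import Mathlib

open MeasureTheory ProbabilityTheory Matrix

lemma l2_mul_int {Ω : Type*} [MeasurableSpace Ω] {μ : Measure Ω} {f g : Ω → ℝ}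
    (hf : MemLp f 2 μ) (hg : MemLp g 2 μ) :
    Integrable (fun ω => f ω * g ω) μ := by
  have h : (fun ω => (((f ω + g ω) ^ 2 - f ω ^ 2) - g ω ^ 2) / 2) = fun ω => f ω * g ω := by
    funext ω; ring
  rw [← h]
  exact ((((hf.add hg).integrable_sq.sub hf.integrable_sq).sub hg.integrable_sq).div_const 2)

/-- A single linear estimator `w*` works uniformly for all
zero-mean signals `X'` of variance at most `λ²` that are independent of the
zero-mean noise vector `N` (with positive-definite covariance `K₂`):
`E[(w*ᵀ(νX' + N) − X')²] ≤ λ²/(1 + SNR_a)` where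
`K₁ = K₂ + λ²ννᵀ` and `SNR_a = det K₁ / det K₂ − 1`. -/
theorem lmmse_uniform_estimator {Ω : Type*} [MeasurableSpace Ω]
    (μ : Measure Ω) [IsProbabilityMeasure μ] {m : ℕ}
    (N : Fin m → Ω → ℝ)
    (hNm : ∀ i, Measurable (N i)) (hN2 : ∀ i, MemLp (N i) 2 μ)
    (hNmean : ∀ i, (∫ ω, N i ω ∂μ) = 0)
    (K₂ : Matrix (Fin m) (Fin m) ℝ)
    (hK₂ : K₂ = Matrix.of fun i j => ∫ ω, N i ω * N j ω ∂μ)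
    (hK₂pos : K₂.PosDef)
    (ν : Fin m → ℝ) (lam : ℝ) (hlam : 0 < lam)
    (K₁ : Matrix (Fin m) (Fin m) ℝ)
    (hK₁ : K₁ = K₂ + lam ^ 2 • Matrix.vecMulVec ν ν)
    (SNRa : ℝ) (hSNR : SNRa = K₁.det / K₂.det - 1) :
    ∃ w : Fin m → ℝ, ∀ X' : Ω → ℝ,
      Measurable X' → MemLp X' 2 μ →
      IndepFun X' (fun ω => fun i => N i ω) μ →
      (∫ ω, X' ω ∂μ) = 0 → (∫ ω, (X' ω) ^ 2 ∂μ) ≤ lam ^ 2 →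
      (∫ ω, ((∑ i, w i * (ν i * X' ω + N i ω)) - X' ω) ^ 2 ∂μ)
        ≤ lam ^ 2 / (1 + SNRa) := by
  classical
  -- mulVec of a rank-one matrix
  have hmv : ∀ x : Fin m → ℝ, (Matrix.vecMulVec ν ν) *ᵥ x = (ν ⬝ᵥ x) • ν := by
    intro x
    funext i
    simp only [Matrix.mulVec, dotProduct, Matrix.vecMulVec_apply, Pi.smul_apply,
      smul_eq_mul, Finset.sum_mul]
    exact Finset.sum_congr rfl fun j _ => by ring
  -- positive semidefiniteness of the rank-one part
  have hsemi : (lam ^ 2 • Matrix.vecMulVec ν ν).PosSemidef := by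
    rw [Matrix.posSemidef_iff_dotProduct_mulVec]
    constructor
    · ext i j
      simp [Matrix.conjTranspose_apply, Matrix.vecMulVec_apply, mul_comm]
    · intro x
      have hst : star x = x := by funext i; simp
      rw [hst, Matrix.smul_mulVec, hmv x, dotProduct_smul, dotProduct_smul,
        dotProduct_comm x ν]
      simp only [smul_eq_mul]
      nlinarith [sq_nonneg (ν ⬝ᵥ x), sq_nonneg lam]
  have hK₁pos : K₁.PosDef := by
    rw [hK₁]; exact hK₂pos.add_posSemidef hsemi
  have hd₁ : 0 < K₁.det := hK₁pos.det_pos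
  have hd₂ : 0 < K₂.det := hK₂pos.det_pos
  have hu₁ : IsUnit K₁.det := isUnit_iff_ne_zero.mpr hd₁.ne'
  set w : Fin m → ℝ := lam ^ 2 • (K₁⁻¹ *ᵥ ν) with hw
  set t : ℝ := lam ^ 2 * (ν ⬝ᵥ K₁⁻¹ *ᵥ ν) with ht
  have hνw : ν ⬝ᵥ w = t := by
    rw [hw, dotProduct_smul, ht, smul_eq_mul]
  -- matrix determinant lemma: det K₂ = det K₁ * (1 - t)
  have hK₂K₁ : K₂ = K₁ + Matrix.replicateCol Unit ((-lam ^ 2) • ν) * Matrix.replicateRow Unit ν := by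
    rw [hK₁]
    ext i j
    simp [Matrix.add_apply, Matrix.mul_apply, Matrix.replicateCol_apply, Matrix.replicateRow_apply,
      Matrix.vecMulVec_apply, Matrix.smul_apply, smul_eq_mul]
    ring
  have hdet : K₂.det = K₁.det * (1 - t) := by
    rw [hK₂K₁, Matrix.det_add_replicateCol_mul_replicateRow hu₁]
    congr 1
    rw [Matrix.det_unique]
    simp [Matrix.mul_apply, Matrix.replicateRow_apply, Matrix.replicateCol_apply, dotProduct, Matrix.mulVec,
      Finset.mul_sum, Finset.sum_mul, ht]
    ring_nf
    congr 1
    rw [Finset.sum_comm]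
    exact Finset.sum_congr rfl fun i _ => Finset.sum_congr rfl fun j _ => by ring
  have h1t : (0:ℝ) < 1 - t := by
    have := hdet
    nlinarith
  -- the key linear-algebra identity for w
  have hK₁w : K₁ *ᵥ w = lam ^ 2 • ν := by
    rw [hw, Matrix.mulVec_smul, Matrix.mulVec_mulVec, Matrix.mul_nonsing_inv _ hu₁,
      Matrix.one_mulVec]
  have hK₂w : K₂ *ᵥ w = (lam ^ 2 * (1 - t)) • ν := by
    have h1 := hK₁w
    rw [hK₁, Matrix.add_mulVec, Matrix.smul_mulVec, hmv w, hνw] at h1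
    funext i
    have h2 := congrFun h1 i
    simp only [Pi.add_apply, Pi.smul_apply, smul_eq_mul] at h2 ⊢
    nlinarith [h2]
  -- the value of the bound
  have hrhs : lam ^ 2 / (1 + SNRa) = lam ^ 2 * (1 - t) := by
    have h1 : 1 + SNRa = K₁.det / K₂.det := by rw [hSNR]; ring
    rw [h1, hdet]
    field_simp
  refine ⟨w, ?_⟩
  intro X' hX'm hX'2 hindep hXmean hXvar
  -- coordinatewise independence
  have hind : ∀ i, IndepFun X' (N i) μ := by
    intro i
    exact hindep.comp measurable_id (measurable_pi_apply i)
  have hXN : ∀ i, (∫ ω, X' ω * N i ω ∂μ) = 0 := by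
    intro i
    have h : (∫ ω, X' ω * N i ω ∂μ) = (∫ ω, X' ω ∂μ) * (∫ ω, N i ω ∂μ) :=
      (hind i).integral_fun_mul_eq_mul_integral hX'2.1 (hN2 i).1
    rw [h, hXmean, zero_mul]
  have hXNi : ∀ i, Integrable (fun ω => X' ω * N i ω) μ := fun i => l2_mul_int hX'2 (hN2 i)
  have hNNi : ∀ i j, Integrable (fun ω => N i ω * N j ω) μ := fun i j =>
    l2_mul_int (hN2 i) (hN2 j)
  have hX2 : Integrable (fun ω => X' ω ^ 2) μ := hX'2.integrable_sq
  have hKij : ∀ i j, (∫ ω, N i ω * N j ω ∂μ) = K₂ i j := by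
    intro i j; rw [hK₂]; rfl
  -- expand the square pointwise
  have hexp : (fun ω => ((∑ i, w i * (ν i * X' ω + N i ω)) - X' ω) ^ 2)
      = fun ω => ((t - 1) ^ 2 * X' ω ^ 2
          + ∑ i, (2 * (t - 1) * w i) * (X' ω * N i ω))
          + ∑ i, ∑ j, (w i * w j) * (N i ω * N j ω) := by
    funext ω
    have h1 : (∑ i, w i * (ν i * X' ω + N i ω))
        = (ν ⬝ᵥ w) * X' ω + ∑ i, w i * N i ω := by
      rw [dotProduct, Finset.sum_mul, ← Finset.sum_add_distrib]
      exact Finset.sum_congr rfl fun i _ => by ring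
    have h2 : ∑ i, (2 * (t - 1) * w i) * (X' ω * N i ω)
        = (2 * (t - 1)) * (X' ω * ∑ i, w i * N i ω) := by
      rw [Finset.mul_sum, Finset.mul_sum]
      exact Finset.sum_congr rfl fun i _ => by ring
    have h3 : ∑ i, ∑ j, (w i * w j) * (N i ω * N j ω)
        = (∑ i, w i * N i ω) * (∑ j, w j * N j ω) := by
      rw [Finset.sum_mul_sum]
      exact Finset.sum_congr rfl fun i _ => Finset.sum_congr rfl fun j _ => by ring
    rw [h1, hνw, h2, h3]
    ring
  have hi1 : Integrable (fun ω => (t - 1) ^ 2 * X' ω ^ 2) μ := hX2.const_mul _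
  have hi2 : Integrable (fun ω => ∑ i, (2 * (t - 1) * w i) * (X' ω * N i ω)) μ :=
    integrable_finset_sum _ fun i _ => (hXNi i).const_mul _
  have hi3 : Integrable (fun ω => ∑ i, ∑ j, (w i * w j) * (N i ω * N j ω)) μ :=
    integrable_finset_sum _ fun i _ => integrable_finset_sum _ fun j _ => (hNNi i j).const_mul _
  have hi12 : Integrable (fun ω => (t - 1) ^ 2 * X' ω ^ 2
      + ∑ i, (2 * (t - 1) * w i) * (X' ω * N i ω)) μ := hi1.add hi2
  rw [hexp, integral_add hi12 hi3, integral_add hi1 hi2, integral_const_mul _ _,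
    integral_finset_sum _ (fun i _ => (hXNi i).const_mul _),
    integral_finset_sum _ (fun i _ => integrable_finset_sum _ fun j _ => (hNNi i j).const_mul _)]
  have e2 : (∑ i, ∫ ω, (2 * (t - 1) * w i) * (X' ω * N i ω) ∂μ) = 0 := by
    refine Finset.sum_eq_zero fun i _ => ?_
    rw [integral_const_mul _ _, hXN i, mul_zero]
  have e3 : (∑ i, ∫ ω, (∑ j, (w i * w j) * (N i ω * N j ω)) ∂μ) = lam ^ 2 * (1 - t) * t := by
    have e3a : (∑ i, ∫ ω, (∑ j, (w i * w j) * (N i ω * N j ω)) ∂μ)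
        = ∑ i, ∑ j, (w i * w j) * K₂ i j := by
      refine Finset.sum_congr rfl fun i _ => ?_
      rw [integral_finset_sum _ (fun j _ => (hNNi i j).const_mul _)]
      exact Finset.sum_congr rfl fun j _ => by rw [integral_const_mul _ _, hKij i j]
    have e3b : (∑ i, ∑ j, (w i * w j) * K₂ i j) = w ⬝ᵥ (K₂ *ᵥ w) := by
      rw [dotProduct]
      refine Finset.sum_congr rfl fun i _ => ?_
      simp only [Matrix.mulVec, dotProduct, Finset.mul_sum]
      exact Finset.sum_congr rfl fun j _ => by ring
    rw [e3a, e3b, hK₂w, dotProduct_smul, smul_eq_mul, dotProduct_comm w ν, hνw]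
  rw [e2, e3, hrhs]
  nlinarith [mul_nonneg (sq_nonneg (t - 1)) (sub_nonneg.2 hXvar)]
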